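/- arXiv:1310.4418 — 3 statements merged into one kernel-verified Lean document; each statement's English description precedes it below -/
import Mathlib

section
/- The map pack is a monoid morphism from the free monoid of all words with shifted concatenation to the monoid of packed words with shifted concatenation: pack(u * v) = pack(u) * pack(v) for all words u, v. -/
/-- Renaming map for packing: sends letter `i` to the number of distinct
nonzero letters of `w` that are `≤ i` (so `0 ↦ 0`). -/
def packFun (w : List ℕ) (i : ℕ) : ℕ :=
  (w.toFinset.filter (fun j => j ≠ 0 ∧ j ≤ i)).card

/-- The pack operator: order-preserving relabeling of the nonzero letters onto `{1,…,k}`. -/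
def pack (w : List ℕ) : List ℕ := w.map (packFun w)

/-- `wsup w` is the maximum letter of `w` (`0` for the empty word). -/
def wsup (w : List ℕ) : ℕ := w.foldr max 0

/-- `shiftT t w` replaces each nonzero letter `n` of `w` by `n + t`, fixing `0`. -/
def shiftT (t : ℕ) (w : List ℕ) : List ℕ := w.map fun n => if n = 0 then 0 else n + t

/-- Shifted concatenation `u * v = u · T_{sup u}(v)`. -/
def sconcat (u v : List ℕ) : List ℕ := u ++ shiftT (wsup u) v

lemma packFun_mono (w : List ℕ) : Monotone (packFun w) := by
  intro a b hab
  apply Finset.card_le_card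
  intro j hj
  simp only [Finset.mem_filter] at *
  exact ⟨hj.1, hj.2.1, hj.2.2.trans hab⟩

lemma packFun_zero (w : List ℕ) : packFun w 0 = 0 := by
  simp [packFun, Nat.le_zero]

lemma mem_le_wsup {x : ℕ} {w : List ℕ} (h : x ∈ w) : x ≤ wsup w := by
  induction w with
  | nil => simp at h
  | cons a l ih =>
    rcases List.mem_cons.mp h with h | h
    · subst h; exact le_max_left _ _
    · exact le_trans (ih h) (le_max_right _ _)

lemma wsup_map_of_mono {f : ℕ → ℕ} (hf : Monotone f) (h0 : f 0 = 0) (w : List ℕ) :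
    wsup (w.map f) = f (wsup w) := by
  induction w with
  | nil => simp [wsup, h0]
  | cons a l ih =>
    simp only [wsup, List.map_cons, List.foldr_cons] at *
    rw [ih, ← hf.map_max]

lemma wsup_pack (w : List ℕ) : wsup (pack w) = packFun w (wsup w) :=
  wsup_map_of_mono (packFun_mono w) (packFun_zero w) w

lemma shift_inj (s : ℕ) : Function.Injective (fun n => if n = 0 then 0 else n + s) := by
  intro a b h
  simp only at h
  split_ifs at h <;> omega

lemma packFun_le_eq (u v : List ℕ) {i : ℕ} (hi : i ≤ wsup u) :
    packFun (sconcat u v) i = packFun u i := by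
  unfold packFun sconcat
  congr 1
  rw [List.toFinset_append, Finset.filter_union]
  have : (shiftT (wsup u) v).toFinset.filter (fun j => j ≠ 0 ∧ j ≤ i) = ∅ := by
    rw [Finset.filter_eq_empty_iff]
    intro j hj
    simp only [shiftT, List.mem_toFinset, List.mem_map] at hj
    obtain ⟨n, _, rfl⟩ := hj
    split_ifs with h
    · simp
    · rintro ⟨-, hle⟩
      omega
  rw [this, Finset.union_empty]

lemma packFun_shift_eq (u v : List ℕ) {x : ℕ} (hx : x ≠ 0) :
    packFun (sconcat u v) (x + wsup u) = packFun v x + packFun u (wsup u) := by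
  set s := wsup u with hs
  unfold packFun sconcat
  rw [List.toFinset_append, Finset.filter_union]
  have hA : u.toFinset.filter (fun j => j ≠ 0 ∧ j ≤ x + s) =
      u.toFinset.filter (fun j => j ≠ 0 ∧ j ≤ s) := by
    apply Finset.filter_congr
    intro j hj
    have := mem_le_wsup (List.mem_toFinset.mp hj)
    simp only [← hs] at this
    constructor <;> rintro ⟨h1, -⟩ <;> exact ⟨h1, by omega⟩
  have hBset : (shiftT s v).toFinset = v.toFinset.image (fun n => if n = 0 then 0 else n + s) := by
    ext j
    simp [shiftT]
  have hB : (shiftT s v).toFinset.filter (fun j => j ≠ 0 ∧ j ≤ x + s) =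
      (v.toFinset.filter (fun n => n ≠ 0 ∧ n ≤ x)).image (fun n => if n = 0 then 0 else n + s) := by
    rw [hBset, Finset.filter_image]
    congr 1
    apply Finset.filter_congr
    intro n _
    split_ifs with h
    · simp [h]
    · simp only [h, ne_eq, not_false_eq_true, true_and]
      omega
  rw [hA, hB]
  rw [Finset.card_union_of_disjoint]
  · rw [Finset.card_image_of_injective _ (shift_inj s), Nat.add_comm]
  · rw [Finset.disjoint_right]
    intro a ha ha'
    simp only [Finset.mem_image, Finset.mem_filter] at ha ha'
    obtain ⟨n, ⟨-, hn0, -⟩, rfl⟩ := ha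
    rw [if_neg hn0] at ha'
    have := mem_le_wsup (List.mem_toFinset.mp ha'.1)
    omega

lemma packFun_pos {x : ℕ} {w : List ℕ} (hx : x ≠ 0) (hm : x ∈ w) : packFun w x ≠ 0 := by
  unfold packFun
  exact Finset.card_ne_zero_of_mem (Finset.mem_filter.mpr ⟨List.mem_toFinset.mpr hm, hx, le_refl x⟩)

/-- `pack` is a morphism of monoids for the shifted concatenation. -/
theorem pack_sconcat (u v : List ℕ) :
    pack (sconcat u v) = sconcat (pack u) (pack v) := by
  have key : pack (sconcat u v) = (sconcat u v).map (packFun (sconcat u v)) := rfl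
  rw [key]
  show (u ++ shiftT (wsup u) v).map _ = pack u ++ shiftT (wsup (pack u)) (pack v)
  rw [List.map_append]
  congr 1
  · apply List.map_congr_left
    intro x hx
    exact packFun_le_eq u v (mem_le_wsup hx)
  · rw [wsup_pack]
    unfold shiftT pack
    rw [List.map_map, List.map_map]
    apply List.map_congr_left
    intro x hx
    simp only [Function.comp_apply]
    by_cases h : x = 0
    · subst h
      simp [packFun_zero]
    · rw [if_neg h, if_neg (packFun_pos h hx)]
      exact packFun_shift_eq u v h
end

section
/- Every nonempty packed word w can be written uniquely as w = v_1 * v_2 * ... * v_n where each v_i is a nonempty irreducible packed word and * is the shifted concatenation. Consequently, the monoid of packed words under shifted concatenation is a free monoid with basis the irreducible packed words. -/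
/-- A word is packed if it is fixed by `pack`. -/
def Packed (w : List ℕ) : Prop := pack w = w

/-- An irreducible packed word: nonempty, packed, and not a shifted concatenation
of two nonempty packed words. -/
def IrrPacked (w : List ℕ) : Prop :=
  Packed w ∧ w ≠ [] ∧
    ¬ ∃ u v : List ℕ, Packed u ∧ Packed v ∧ u ≠ [] ∧ v ≠ [] ∧ w = sconcat u v

namespace PW

def S (w : List ℕ) : Finset ℕ := w.toFinset.filter (· ≠ 0)

lemma mem_S {w : List ℕ} {x : ℕ} : x ∈ S w ↔ x ∈ w ∧ x ≠ 0 := by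
  simp [S]

lemma le_wsup {w : List ℕ} {x : ℕ} (h : x ∈ w) : x ≤ wsup w := by
  induction w with
  | nil => simp at h
  | cons a t ih =>
    rcases List.mem_cons.mp h with h | h
    · subst h; exact le_max_left _ _
    · exact le_trans (ih h) (le_max_right _ _)

lemma wsup_le {w : List ℕ} {n : ℕ} (h : ∀ x ∈ w, x ≤ n) : wsup w ≤ n := by
  induction w with
  | nil => simp [wsup]
  | cons a t ih =>
    have : wsup (a :: t) = max a (wsup t) := rfl
    rw [this]
    exact max_le (h a (by simp)) (ih fun x hx => h x (by simp [hx]))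

lemma wsup_mem {w : List ℕ} (h : wsup w ≠ 0) : wsup w ∈ w := by
  induction w with
  | nil => simp [wsup] at h
  | cons a t ih =>
    have he : wsup (a :: t) = max a (wsup t) := rfl
    rw [he] at h ⊢
    rcases max_cases a (wsup t) with ⟨h1, _⟩ | ⟨h1, _⟩
    · rw [h1]; exact List.mem_cons_self
    · rw [h1] at h ⊢; exact List.mem_cons_of_mem _ (ih h)

lemma map_self {f : ℕ → ℕ} {l : List ℕ} (h : ∀ x ∈ l, f x = x) : l.map f = l := by
  induction l with
  | nil => rfl
  | cons a t ih => simp [h a (by simp), ih fun x hx => h x (by simp [hx])]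

lemma map_fix {f : ℕ → ℕ} {l : List ℕ} (h : l.map f = l) : ∀ x ∈ l, f x = x := by
  induction l with
  | nil => simp
  | cons a t ih =>
    simp only [List.map_cons, List.cons.injEq] at h
    intro x hx
    rcases List.mem_cons.mp hx with hx | hx
    · subst hx; exact h.1
    · exact ih h.2 x hx

lemma packFun_eq (w : List ℕ) (i : ℕ) :
    packFun w i = ((S w).filter (· ≤ i)).card := by
  unfold packFun S
  rw [Finset.filter_filter]

lemma packed_iff {w : List ℕ} : Packed w ↔ S w = Finset.Icc 1 (wsup w) := by
  constructor
  · intro hp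
    have hsub : S w ⊆ Finset.Icc 1 (wsup w) := by
      intro x hx
      rw [mem_S] at hx
      exact Finset.mem_Icc.2 ⟨Nat.one_le_iff_ne_zero.2 hx.2, le_wsup hx.1⟩
    by_cases h0 : wsup w = 0
    · have hempty : Finset.Icc 1 (wsup w) = ∅ := by rw [h0]; simp
      rw [hempty] at hsub ⊢
      exact Finset.subset_empty.mp hsub
    · have hmem : wsup w ∈ w := wsup_mem h0
      have hx : ∀ x ∈ w, packFun w x = x := map_fix hp
      have hcard : (S w).card = wsup w := by
        have := hx _ hmem
        rw [packFun_eq] at this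
        have hfil : (S w).filter (· ≤ wsup w) = S w := by
          apply Finset.filter_true_of_mem
          intro x hxS; exact le_wsup (mem_S.1 hxS).1
        rw [hfil] at this; exact this
      apply Finset.eq_of_subset_of_card_le hsub
      rw [hcard, Nat.card_Icc]
      omega
  · intro hS
    have hval : ∀ i, packFun w i = min i (wsup w) := by
      intro i
      rw [packFun_eq, hS]
      have : (Finset.Icc 1 (wsup w)).filter (· ≤ i) = Finset.Icc 1 (min i (wsup w)) := by
        ext j; simp [Finset.mem_Icc, Finset.mem_filter]; omega
      rw [this, Nat.card_Icc]; omega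
    unfold Packed pack
    apply map_self
    intro x hx
    rw [hval]
    exact min_eq_left (le_wsup hx)

lemma wsup_zero_iff {w : List ℕ} : wsup w = 0 ↔ ∀ x ∈ w, x = 0 := by
  constructor
  · intro h x hx
    have := le_wsup hx; omega
  · intro h
    have := wsup_le (w := w) (n := 0) (fun x hx => by rw [h x hx])
    omega

lemma shiftT_of_wsup_zero {t : ℕ} {v : List ℕ} (h : wsup v = 0) : shiftT t v = v := by
  apply map_self
  intro x hx
  rw [wsup_zero_iff.mp h x hx]
  simp

lemma wsup_shiftT {t : ℕ} {v : List ℕ} (h : wsup v ≠ 0) : wsup (shiftT t v) = wsup v + t := by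
  apply le_antisymm
  · apply wsup_le
    intro x hx
    rcases List.mem_map.mp hx with ⟨y, hy, rfl⟩
    split
    · omega
    · exact Nat.add_le_add_right (le_wsup hy) t
  · apply le_wsup
    have hm := wsup_mem h
    refine List.mem_map.mpr ⟨wsup v, hm, ?_⟩
    simp [h]

lemma wsup_append {u v : List ℕ} : wsup (u ++ v) = max (wsup u) (wsup v) := by
  unfold wsup
  rw [List.foldr_append]
  induction u with
  | nil => simp
  | cons a t ih => simp [List.foldr_cons, ih, max_assoc]

lemma wsup_sconcat (u v : List ℕ) : wsup (sconcat u v) = wsup u + wsup v := by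
  unfold sconcat
  rw [wsup_append]
  by_cases h : wsup v = 0
  · rw [shiftT_of_wsup_zero h, h]; omega
  · rw [wsup_shiftT h]; omega

lemma shiftT_shiftT (a b : ℕ) (w : List ℕ) : shiftT a (shiftT b w) = shiftT (b + a) w := by
  unfold shiftT
  rw [List.map_map]
  apply List.map_congr_left
  intro x _
  by_cases h : x = 0 <;> simp [h] <;> omega

lemma shiftT_append (t : ℕ) (u v : List ℕ) :
    shiftT t (u ++ v) = shiftT t u ++ shiftT t v := by
  unfold shiftT; rw [List.map_append]

lemma sconcat_nil (u : List ℕ) : sconcat u [] = u := by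
  simp [sconcat, shiftT]

lemma nil_sconcat (v : List ℕ) : sconcat [] v = v := by
  have : wsup ([] : List ℕ) = 0 := rfl
  simp only [sconcat, this, List.nil_append]
  apply map_self
  intro x _
  by_cases h : x = 0 <;> simp [h]

lemma sconcat_assoc (u v x : List ℕ) :
    sconcat (sconcat u v) x = sconcat u (sconcat v x) := by
  unfold sconcat
  rw [wsup_append, shiftT_append, shiftT_shiftT, List.append_assoc]
  congr 3
  by_cases h : wsup v = 0
  · rw [shiftT_of_wsup_zero h, h]; congr 1; omega
  · rw [wsup_shiftT h]; congr 1; omega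

lemma S_append (u v : List ℕ) : S (u ++ v) = S u ∪ S v := by
  unfold S
  rw [List.toFinset_append, Finset.filter_union]

lemma S_shiftT (t : ℕ) (v : List ℕ) : S (shiftT t v) = (S v).image (· + t) := by
  ext x
  simp only [mem_S, Finset.mem_image, shiftT, List.mem_map]
  constructor
  · rintro ⟨⟨y, hy, hyx⟩, hx0⟩
    by_cases h : y = 0
    · simp [h] at hyx; omega
    · exact ⟨y, ⟨hy, h⟩, by simpa [h] using hyx⟩
  · rintro ⟨y, hy, rfl⟩
    exact ⟨⟨y, hy.1, by simp [hy.2]⟩, by omega⟩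

lemma packed_sconcat {u v : List ℕ} (hu : Packed u) (hv : Packed v) :
    Packed (sconcat u v) := by
  rw [packed_iff] at *
  rw [wsup_sconcat]
  unfold sconcat
  rw [S_append, S_shiftT, hu, hv]
  ext j
  simp only [Finset.mem_union, Finset.mem_Icc, Finset.mem_image]
  constructor
  · rintro (h | ⟨y, hy, rfl⟩)
    · omega
    · omega
  · intro h
    by_cases hj : j ≤ wsup u
    · left; omega
    · right; exact ⟨j - wsup u, by omega, by omega⟩

lemma packed_of_sconcat {u v : List ℕ} (hu : Packed u) (huv : Packed (sconcat u v)) :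
    Packed v := by
  rw [packed_iff] at *
  rw [wsup_sconcat] at huv
  unfold sconcat at huv
  rw [S_append, S_shiftT, hu] at huv
  ext j
  simp only [Finset.mem_Icc]
  constructor
  · intro hj
    rw [mem_S] at hj
    exact ⟨Nat.one_le_iff_ne_zero.mpr hj.2, le_wsup hj.1⟩
  · intro hj
    have : j + wsup u ∈ Finset.Icc 1 (wsup u + wsup v) := Finset.mem_Icc.mpr (by omega)
    rw [← huv] at this
    rcases Finset.mem_union.mp this with h | h
    · have := Finset.mem_Icc.mp h; omega
    · rcases Finset.mem_image.mp h with ⟨y, hy, hxy⟩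
      have : y = j := by omega
      rwa [← this]

lemma shiftT_inj {t : ℕ} {r r' : List ℕ} (h : shiftT t r = shiftT t r') : r = r' := by
  have : Function.Injective (fun n => if n = 0 then 0 else n + t) := by
    intro a b hab
    by_cases ha : a = 0 <;> by_cases hb : b = 0 <;> simp [ha, hb] at hab <;> omega
  exact List.map_injective_iff.mpr this h

lemma length_shiftT (t : ℕ) (w : List ℕ) : (shiftT t w).length = w.length := by
  simp [shiftT]

lemma not_lt_len {u u' r r' : List ℕ} (hu : Packed u) (hune : u ≠ [])
    (hu' : IrrPacked u') (h : sconcat u r = sconcat u' r')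
    (hlt : u.length < u'.length) : False := by
  set x := shiftT (wsup u) r with hx
  set x' := shiftT (wsup u') r' with hx'
  have h0 : u ++ x = u' ++ x' := h
  have hlen : u.length + r.length = u'.length + r'.length := by
    have := congrArg List.length h0
    simpa [hx, hx', length_shiftT] using this
  set k := u'.length - u.length with hk
  have hk0 : 0 < k := by omega
  have hkr : k ≤ r.length := by omega
  have htake : u ++ x.take k = u' := by
    have h1 := congrArg (List.take u'.length) h0
    rwa [List.take_append, List.take_append,
      List.take_length, Nat.sub_self, List.take_zero, List.append_nil,
      List.take_of_length_le hlt.le] at h1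
  have hxk : x.take k = shiftT (wsup u) (r.take k) := by
    rw [hx]; unfold shiftT; rw [List.map_take]
  have hsc : u' = sconcat u (r.take k) := by
    rw [← htake, hxk]; rfl
  have htne : r.take k ≠ [] := by
    have hlt : (r.take k).length = k := by rw [List.length_take]; omega
    intro hc
    rw [hc, List.length_nil] at hlt
    omega
  have htp : Packed (r.take k) := packed_of_sconcat hu (hsc ▸ hu'.1)
  exact hu'.2.2 ⟨u, r.take k, hu, htp, hune, htne, hsc⟩

lemma head_cancel {u u' r r' : List ℕ} (hu : IrrPacked u) (hu' : IrrPacked u')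
    (h : sconcat u r = sconcat u' r') : u = u' ∧ r = r' := by
  have hlen : u.length = u'.length := by
    rcases lt_trichotomy u.length u'.length with hl | hl | hl
    · exact absurd hl (fun hl => not_lt_len hu.1 hu.2.1 hu' h hl)
    · exact hl
    · exact absurd hl (fun hl => not_lt_len hu'.1 hu'.2.1 hu h.symm hl)
  have h0 : u ++ shiftT (wsup u) r = u' ++ shiftT (wsup u') r' := h
  obtain ⟨rfl, h2⟩ := List.append_inj h0 hlen
  exact ⟨rfl, shiftT_inj h2⟩

lemma foldr_sconcat_append (l₁ l₂ : List (List ℕ)) :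
    (l₁ ++ l₂).foldr sconcat [] = sconcat (l₁.foldr sconcat []) (l₂.foldr sconcat []) := by
  induction l₁ with
  | nil => simp [nil_sconcat]
  | cons a t ih => simp only [List.cons_append, List.foldr_cons, ih, sconcat_assoc]

lemma packed_nil : Packed ([] : List ℕ) := rfl

lemma foldr_packed {l : List (List ℕ)} (h : ∀ v ∈ l, Packed v) :
    Packed (l.foldr sconcat []) := by
  induction l with
  | nil => exact packed_nil
  | cons a t ih =>
    exact packed_sconcat (h a (by simp)) (ih fun v hv => h v (by simp [hv]))

lemma foldr_ne_nil {l : List (List ℕ)} (hl : l ≠ []) (h : ∀ v ∈ l, v ≠ []) :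
    l.foldr sconcat [] ≠ [] := by
  cases l with
  | nil => exact absurd rfl hl
  | cons a t =>
    simp only [List.foldr_cons]
    unfold sconcat
    intro hc
    exact h a (by simp) (List.append_eq_nil_iff.mp hc).1

lemma exists_fact : ∀ n (w : List ℕ), w.length ≤ n → Packed w → w ≠ [] →
    ∃ l : List (List ℕ), l ≠ [] ∧ (∀ v ∈ l, IrrPacked v) ∧ l.foldr sconcat [] = w := by
  intro n
  induction n with
  | zero =>
    intro w hlen hp hne
    rw [Nat.le_zero, List.length_eq_zero_iff] at hlen
    exact absurd hlen hne
  | succ n ih =>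
    intro w hlen hp hne
    by_cases hirr : IrrPacked w
    · exact ⟨[w], by simp, by simpa using hirr, by simp [sconcat_nil]⟩
    · have hex : ∃ u v : List ℕ, Packed u ∧ Packed v ∧ u ≠ [] ∧ v ≠ [] ∧ w = sconcat u v := by
        by_contra hc
        exact hirr ⟨hp, hne, hc⟩
      obtain ⟨u, v, hu, hv, hune, hvne, rfl⟩ := hex
      have hlw : (sconcat u v).length = u.length + v.length := by
        unfold sconcat; rw [List.length_append, length_shiftT]
      have hul : 0 < u.length := List.length_pos_iff.mpr hune
      have hvl : 0 < v.length := List.length_pos_iff.mpr hvne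
      obtain ⟨lu, hlune, hluirr, hlueq⟩ := ih u (by omega) hu hune
      obtain ⟨lv, hlvne, hlvirr, hlveq⟩ := ih v (by omega) hv hvne
      refine ⟨lu ++ lv, by simp [hlune], ?_, ?_⟩
      · intro x hx
        rcases List.mem_append.mp hx with hx | hx
        · exact hluirr x hx
        · exact hlvirr x hx
      · rw [foldr_sconcat_append, hlueq, hlveq]

lemma uniq : ∀ l₁ l₂ : List (List ℕ), (∀ v ∈ l₁, IrrPacked v) → (∀ v ∈ l₂, IrrPacked v) →
    l₁.foldr sconcat [] = l₂.foldr sconcat [] → l₁ = l₂ := by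
  intro l₁
  induction l₁ with
  | nil =>
    intro l₂ _ h2 heq
    cases l₂ with
    | nil => rfl
    | cons b s =>
      exfalso
      exact foldr_ne_nil (by simp) (fun v hv => (h2 v hv).2.1) heq.symm
  | cons a t ih =>
    intro l₂ h1 h2 heq
    cases l₂ with
    | nil =>
      exfalso
      exact foldr_ne_nil (by simp) (fun v hv => (h1 v hv).2.1) heq
    | cons b s =>
      simp only [List.foldr_cons] at heq
      obtain ⟨rfl, heq2⟩ := head_cancel (h1 a (by simp)) (h2 b (by simp)) heq
      rw [ih s (fun v hv => h1 v (by simp [hv])) (fun v hv => h2 v (by simp [hv])) heq2]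

end PW

/-- Every nonempty packed word factors uniquely as a shifted concatenation of
nonempty irreducible packed words; hence the monoid of packed words under shifted
concatenation is free on the irreducible packed words. -/
theorem packed_unique_factorization (w : List ℕ) (hw : Packed w) (hne : w ≠ []) :
    ∃! l : List (List ℕ),
      l ≠ [] ∧ (∀ v ∈ l, IrrPacked v) ∧ l.foldr sconcat [] = w := by
  obtain ⟨l, hlne, hlirr, hleq⟩ := PW.exists_fact w.length w le_rfl hw hne
  refine ⟨l, ⟨hlne, hlirr, hleq⟩, ?_⟩
  rintro l' ⟨-, hl'irr, hl'eq⟩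
  exact PW.uniq l' l hl'irr hlirr (hl'eq.trans hleq.symm)
end

section
/- The number d(n,k) of packed words of length n with maximum letter k satisfies d(n,k) = S(n,k)·k! + S(n,k+1)·(k+1)! = S(n+1,k+1)·k!, where S denotes Stirling numbers of the second kind. -/
/-- Stirling numbers of the second kind. -/
def stirling2 : ℕ → ℕ → ℕ
  | 0, 0 => 1
  | 0, _ + 1 => 0
  | _ + 1, 0 => 0
  | n + 1, k + 1 => stirling2 n k + (k + 1) * stirling2 n (k + 1)


open Finset

lemma wsup_cons (a : ℕ) (w : List ℕ) : wsup (a :: w) = max a (wsup w) := rfl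

lemma le_wsup {w : List ℕ} {a : ℕ} (h : a ∈ w) : a ≤ wsup w := by
  induction w with
  | nil => simp at h
  | cons b l ih =>
    rw [wsup_cons]
    rcases List.mem_cons.1 h with rfl | h
    · exact le_max_left _ _
    · exact le_trans (ih h) (le_max_right _ _)

lemma wsup_le {w : List ℕ} {k : ℕ} (h : ∀ x ∈ w, x ≤ k) : wsup w ≤ k := by
  induction w with
  | nil => simp [wsup]
  | cons b l ih =>
    rw [wsup_cons]
    exact max_le (h b (by simp)) (ih fun x hx => h x (by simp [hx]))

lemma wsup_mem {w : List ℕ} (h : wsup w ≠ 0) : wsup w ∈ w := by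
  induction w with
  | nil => simp [wsup] at h
  | cons b l ih =>
    rw [wsup_cons] at h ⊢
    rcases max_cases b (wsup l) with ⟨h1, _⟩ | ⟨h1, _⟩
    · rw [h1]; exact List.mem_cons_self
    · rw [h1] at h ⊢; exact List.mem_cons_of_mem _ (ih h)

lemma list_map_eq_self {f : ℕ → ℕ} {w : List ℕ} :
    w.map f = w ↔ ∀ x ∈ w, f x = x := by
  induction w with
  | nil => simp
  | cons a l ih => simp [ih]

lemma pack_eq_self_iff {w : List ℕ} :
    pack w = w ↔ ∀ i, 1 ≤ i → i ≤ wsup w → i ∈ w := by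
  constructor
  · intro h i h1 hk
    have hx : ∀ x ∈ w, packFun w x = x := list_map_eq_self.1 h
    by_contra hi
    set k := wsup w with hkdef
    have hk0 : k ≠ 0 := by omega
    have hkm : k ∈ w := wsup_mem hk0
    have hpk : packFun w k = k := hx k hkm
    have hsub : w.toFinset.filter (fun j => j ≠ 0 ∧ j ≤ k) ⊆ (Finset.Icc 1 k).erase i := by
      intro j hj
      simp only [Finset.mem_filter, List.mem_toFinset] at hj
      simp only [Finset.mem_erase, Finset.mem_Icc]
      refine ⟨fun hji => hi (hji ▸ hj.1), by omega, hj.2.2⟩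
    have := Finset.card_le_card hsub
    rw [Finset.card_erase_of_mem (by simp [Finset.mem_Icc]; omega), Nat.card_Icc] at this
    unfold packFun at hpk
    omega
  · intro cov
    refine list_map_eq_self.2 fun a ha => ?_
    have hak : a ≤ wsup w := le_wsup ha
    have : w.toFinset.filter (fun j => j ≠ 0 ∧ j ≤ a) = Finset.Icc 1 a := by
      ext j
      simp only [Finset.mem_filter, List.mem_toFinset, Finset.mem_Icc]
      constructor
      · rintro ⟨_, hj0, hja⟩; omega
      · rintro ⟨h1, h2⟩; exact ⟨cov j h1 (le_trans h2 hak), by omega, h2⟩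
    unfold packFun
    rw [this, Nat.card_Icc]
    omega


lemma list_map_eq_self' {f : ℕ → ℕ} {w : List ℕ} :
    w.map f = w ↔ ∀ x ∈ w, f x = x := by
  induction w with
  | nil => simp
  | cons a l ih => simp [ih]

def allW : ℕ → Finset ℕ → Finset (List ℕ)
  | 0, _ => {[]}
  | n+1, A => A.biUnion fun a => (allW n A).image (a :: ·)

lemma mem_allW {n : ℕ} {A : Finset ℕ} {w : List ℕ} :
    w ∈ allW n A ↔ w.length = n ∧ ∀ x ∈ w, x ∈ A := by
  induction n generalizing w with
  | zero => cases w <;> simp [allW]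
  | succ n ih =>
    cases w with
    | nil => simp [allW]
    | cons a l =>
      simp only [allW, Finset.mem_biUnion, Finset.mem_image]
      constructor
      · rintro ⟨b, hb, u, hu, heq⟩
        obtain ⟨rfl, rfl⟩ : b = a ∧ u = l := by
          constructor <;> [exact (List.cons.injEq _ _ _ _ ▸ heq).1;
            exact (List.cons.injEq _ _ _ _ ▸ heq).2]
        rcases ih.1 hu with ⟨hl, hA⟩
        refine ⟨by simp [hl], fun x hx => ?_⟩
        rcases List.mem_cons.1 hx with rfl | hx
        · exact hb
        · exact hA x hx
      · rintro ⟨hl, hA⟩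
        exact ⟨a, hA a (by simp), l, ih.2 ⟨by simpa using hl, fun x hx => hA x (by simp [hx])⟩, rfl⟩

def cnt (n : ℕ) (A J : Finset ℕ) : ℕ :=
  ((allW n A).filter (fun w => ∀ i ∈ J, i ∈ w)).card

lemma cnt_succ (n : ℕ) (A J : Finset ℕ) :
    cnt (n+1) A J = ∑ a ∈ A, cnt n A (J.erase a) := by
  unfold cnt
  show ((A.biUnion fun a => (allW n A).image (a :: ·)).filter _).card = _
  rw [Finset.filter_biUnion]
  rw [Finset.card_biUnion]
  · refine Finset.sum_congr rfl fun a _ => ?_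
    rw [Finset.filter_image, Finset.card_image_of_injective _ (fun u v h => by
      simpa using (List.cons.injEq _ _ _ _ ▸ h).2)]
    congr 1
    apply Finset.filter_congr
    intro u _
    constructor
    · intro h i hi
      rcases List.mem_cons.1 (h i (Finset.mem_of_mem_erase hi)) with rfl | h'
      · exact absurd rfl (Finset.ne_of_mem_erase hi)
      · exact h'
    · intro h i hi
      by_cases hia : i = a
      · simp [hia]
      · exact List.mem_cons_of_mem _ (h i (Finset.mem_erase.2 ⟨hia, hi⟩))
  · intro a _ b _ hab
    rw [Function.onFun, Finset.disjoint_left]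
    rintro w hw hw'
    simp only [Finset.mem_filter, Finset.mem_image] at hw hw'
    obtain ⟨⟨u, _, rfl⟩, _⟩ := hw
    obtain ⟨⟨v, _, heq⟩, _⟩ := hw'
    exact hab ((List.cons.injEq _ _ _ _ ▸ heq).1.symm)

lemma cnt_relabel (n : ℕ) (A J : Finset ℕ) (σ τ : ℕ → ℕ) (hJ : J ⊆ A)
    (h : ∀ x ∈ A, τ (σ x) = x) :
    cnt n A J = cnt n (A.image σ) (J.image σ) := by
  unfold cnt
  refine Finset.card_bij' (fun w _ => w.map σ) (fun w _ => w.map τ) ?_ ?_ ?_ ?_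
  · intro w hw
    simp only [Finset.mem_filter, mem_allW] at hw ⊢
    obtain ⟨⟨hl, hA⟩, hcov⟩ := hw
    refine ⟨⟨by simp [hl], ?_⟩, ?_⟩
    · intro x hx
      rcases List.mem_map.1 hx with ⟨y, hy, rfl⟩
      exact Finset.mem_image_of_mem σ (hA y hy)
    · intro i hi
      rcases Finset.mem_image.1 hi with ⟨j, hj, rfl⟩
      exact List.mem_map_of_mem (f := σ) (hcov j hj)
  · intro w hw
    simp only [Finset.mem_filter, mem_allW] at hw ⊢
    obtain ⟨⟨hl, hA⟩, hcov⟩ := hw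
    have key : ∀ x ∈ w, ∃ y ∈ A, σ y = x ∧ τ x ∈ A := by
      intro x hx
      rcases Finset.mem_image.1 (hA x hx) with ⟨y, hy, rfl⟩
      exact ⟨y, hy, rfl, by rw [h y hy]; exact hy⟩
    refine ⟨⟨by simp [hl], fun x hx => ?_⟩, fun i hi => ?_⟩
    · rcases List.mem_map.1 hx with ⟨y, hy, rfl⟩
      exact ((key y hy).choose_spec).2.2
    · have hiA : i ∈ A := hJ hi
      have : σ i ∈ w := hcov (σ i) (Finset.mem_image_of_mem σ hi)
      have : τ (σ i) ∈ w.map τ := List.mem_map_of_mem (f := τ) this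
      rwa [h i hiA] at this
  · intro w hw
    simp only [Finset.mem_filter, mem_allW] at hw
    show (w.map σ).map τ = w
    rw [List.map_map]
    exact list_map_eq_self'.2 fun x hx => h x (hw.1.2 x hx)
  · intro w hw
    simp only [Finset.mem_filter, mem_allW] at hw
    show (w.map τ).map σ = w
    rw [List.map_map]
    refine list_map_eq_self'.2 ?_
    intro x hx
    rcases Finset.mem_image.1 (hw.1.2 x hx) with ⟨y, hy, rfl⟩
    simp [Function.comp, h y hy]

lemma cnt_split (n : ℕ) (A : Finset ℕ) (a : ℕ) (ha : a ∈ A) :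
    cnt n A (A.erase a) = cnt n A A + cnt n (A.erase a) (A.erase a) := by
  unfold cnt
  have hsplit := Finset.card_filter_add_card_filter_not
    (s := (allW n A).filter (fun w => ∀ i ∈ A.erase a, i ∈ w)) (p := fun w => a ∈ w)
  rw [Finset.filter_filter, Finset.filter_filter] at hsplit
  have h1 : ((allW n A).filter (fun w => (∀ i ∈ A.erase a, i ∈ w) ∧ a ∈ w))
      = (allW n A).filter (fun w => ∀ i ∈ A, i ∈ w) := by
    apply Finset.filter_congr
    intro w _
    constructor
    · rintro ⟨hcov, haw⟩ i hi
      by_cases hia : i = a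
      · exact hia ▸ haw
      · exact hcov i (Finset.mem_erase.2 ⟨hia, hi⟩)
    · intro h
      exact ⟨fun i hi => h i (Finset.mem_of_mem_erase hi), h a ha⟩
  have h2 : ((allW n A).filter (fun w => (∀ i ∈ A.erase a, i ∈ w) ∧ ¬ a ∈ w))
      = (allW n (A.erase a)).filter (fun w => ∀ i ∈ A.erase a, i ∈ w) := by
    ext w
    simp only [Finset.mem_filter, mem_allW]
    constructor
    · rintro ⟨⟨hl, hA⟩, hcov, haw⟩
      exact ⟨⟨hl, fun x hx => Finset.mem_erase.2 ⟨fun hxa => haw (hxa ▸ hx), hA x hx⟩⟩, hcov⟩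
    · rintro ⟨⟨hl, hA⟩, hcov⟩
      refine ⟨⟨hl, fun x hx => Finset.mem_of_mem_erase (hA x hx)⟩, hcov,
        fun haw => ?_⟩
      exact (Finset.mem_erase.1 (hA a haw)).1 rfl
  rw [h1, h2] at hsplit
  omega

def N (n m : ℕ) : ℕ := cnt n (range m) (range m)

lemma image_sigma (m a : ℕ) (ha : a < m + 1) :
    (range m).image (fun x => if x < a then x else x + 1) = (range (m+1)).erase a := by
  ext y
  simp only [Finset.mem_image, Finset.mem_erase, Finset.mem_range]
  constructor
  · rintro ⟨x, hx, rfl⟩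
    split_ifs with hxa <;> omega
  · rintro ⟨hya, hym⟩
    by_cases hy : y < a
    · exact ⟨y, by omega, if_pos hy⟩
    · exact ⟨y - 1, by omega, by rw [if_neg (by omega)]; omega⟩

lemma cnt_erase (n m a : ℕ) (ha : a < m + 1) :
    cnt n (range (m+1)) ((range (m+1)).erase a) = N n (m+1) + N n m := by
  rw [cnt_split n (range (m+1)) a (by simp [ha])]
  congr 1
  rw [← image_sigma m a ha,
    ← cnt_relabel n (range m) (range m) (fun x => if x < a then x else x + 1)
      (fun y => if y < a then y else y - 1) (le_refl _) ?_]
  · rfl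
  · intro x _
    split_ifs with h1 h2 <;> omega

lemma N_eq (n : ℕ) : ∀ m, N n m = stirling2 n m * m.factorial := by
  induction n with
  | zero =>
    intro m
    cases m with
    | zero => simp [N, cnt, allW, stirling2]
    | succ m =>
      have : ¬ (∀ i ∈ range (m+1), i ∈ ([] : List ℕ)) := by
        intro h; simpa using h 0 (by simp)
      simp only [N, cnt, allW, stirling2, Finset.filter_singleton, if_neg this,
        Finset.card_empty, Nat.zero_mul]
  | succ n ih =>
    intro m
    cases m with
    | zero =>
      simp [N, cnt, allW, stirling2]
    | succ m =>
      rw [N, cnt_succ]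
      have : ∀ a ∈ range (m+1), cnt n (range (m+1)) ((range (m+1)).erase a)
          = N n (m+1) + N n m := by
        intro a haa
        exact cnt_erase n m a (by simpa using haa)
      rw [Finset.sum_congr rfl this, Finset.sum_const, Finset.card_range, smul_eq_mul,
        ih (m+1), ih m]
      show (m+1) * (stirling2 n (m+1) * (m+1).factorial + stirling2 n m * m.factorial)
        = stirling2 (n+1) (m+1) * (m+1).factorial
      rw [show stirling2 (n+1) (m+1) = stirling2 n m + (m + 1) * stirling2 n (m+1) from rfl,
        Nat.factorial_succ]
      ring

lemma Icc_eq_erase (k : ℕ) : Finset.Icc 1 k = (range (k+1)).erase 0 := by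
  ext x
  simp only [Finset.mem_Icc, Finset.mem_erase, Finset.mem_range]
  omega

lemma set_eq_finset (n k : ℕ) (J : Finset ℕ) (hJ : J = Finset.Icc 1 k) :
    {w : List ℕ | pack w = w ∧ w.length = n ∧ wsup w = k}
      = ↑((allW n (range (k+1))).filter (fun w => ∀ i ∈ J, i ∈ w)) := by
  subst hJ
  ext w
  simp only [Set.mem_setOf_eq, Finset.coe_filter, Set.mem_setOf_eq, mem_allW,
    Finset.mem_Icc, Finset.mem_range]
  constructor
  · rintro ⟨hp, hl, hs⟩
    refine ⟨⟨hl, fun x hx => by have := le_wsup hx; omega⟩, fun i hi => ?_⟩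
    exact pack_eq_self_iff.1 hp i hi.1 (hs ▸ hi.2)
  · rintro ⟨⟨hl, hA⟩, hcov⟩
    have hk : wsup w = k := by
      have h1 : wsup w ≤ k := wsup_le fun x hx => by have := hA x hx; omega
      rcases Nat.eq_zero_or_pos k with rfl | hkpos
      · omega
      · have : k ∈ w := hcov k ⟨hkpos, le_refl k⟩
        have := le_wsup this
        omega
    exact ⟨pack_eq_self_iff.2 fun i h1 h2 => hcov i ⟨h1, by omega⟩, hl, hk⟩

/-- The number `d(n,k)` of packed words of length `n` with supremum `k` equals
`S(n,k)·k! + S(n,k+1)·(k+1)! = S(n+1,k+1)·k!`. -/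
theorem card_packed_sup (n k : ℕ) :
    {w : List ℕ | pack w = w ∧ w.length = n ∧ wsup w = k}.ncard
        = stirling2 n k * k.factorial + stirling2 n (k + 1) * (k + 1).factorial ∧
    {w : List ℕ | pack w = w ∧ w.length = n ∧ wsup w = k}.ncard
        = stirling2 (n + 1) (k + 1) * k.factorial := by
  have hmain : {w : List ℕ | pack w = w ∧ w.length = n ∧ wsup w = k}.ncard
      = stirling2 n k * k.factorial + stirling2 n (k + 1) * (k + 1).factorial := by
    rw [set_eq_finset n k _ rfl, Set.ncard_coe_finset]
    show cnt n (range (k+1)) (Finset.Icc 1 k) = _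
    rw [Icc_eq_erase, cnt_erase n k 0 (by omega), N_eq, N_eq]
    omega
  refine ⟨hmain, ?_⟩
  rw [hmain, show stirling2 (n+1) (k+1) = stirling2 n k + (k + 1) * stirling2 n (k+1) from rfl,
    Nat.factorial_succ]
  ring
end
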